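/- Let n ≥ 2 and write √n = k + ε with k the integer part and ε ∈ [0,1) the fractional part. If 0 ≤ ε ≤ (1 + 2√n − √(1+4n))/2, then min over positive integers m of (1/n)(m + n/m − 1) equals (2√n − 1 + ε²/k)/n. -/

import Mathlib

set_option maxHeartbeats 1000000


theorem stmt_3 (n : ℕ) (hn : 2 ≤ n)
    (k : ℕ) (hk : k = Nat.floor (Real.sqrt n))
    (ε : ℝ) (hε : ε = Real.sqrt n - k)
    (h1 : 0 ≤ ε) (h2 : ε ≤ (1 + 2*Real.sqrt n - Real.sqrt (1 + 4*n))/2) :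
    IsLeast {x : ℝ | ∃ m : ℕ, 1 ≤ m ∧ m ≤ n ∧ x = (1/(n : ℝ)) * (m + (n : ℝ)/m - 1)}
      ((2*Real.sqrt n - 1 + ε^2/k) / n) := by
  set s := Real.sqrt n with hs
  have hn0 : (0:ℝ) < n := by positivity
  have hs0 : 0 ≤ s := Real.sqrt_nonneg _
  have hs2 : s^2 = n := Real.sq_sqrt (le_of_lt hn0)
  have hk1 : 1 ≤ k := by
    rw [hk]
    have : (1:ℝ) ≤ s := by
      rw [hs]
      have : (1:ℝ) ≤ (n:ℝ) := by exact_mod_cast Nat.one_le_of_lt hn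
      nlinarith [Real.sq_sqrt (le_of_lt hn0), Real.sqrt_nonneg (n:ℝ)]
    exact_mod_cast Nat.le_floor (by exact_mod_cast this)
  have hkle : (k:ℝ) ≤ s := by rw [hk]; exact Nat.floor_le hs0
  have hklt : s < k + 1 := by rw [hk]; exact Nat.lt_floor_add_one s
  have hk0 : (0:ℝ) < k := by exact_mod_cast hk1
  have hk1' : (1:ℝ) ≤ k := by exact_mod_cast hk1
  have hk2n : (k:ℝ)^2 ≤ n := by nlinarith
  have hkn : k ≤ n := by
    have hk' : (k:ℝ) ≤ (n:ℝ) := by nlinarith [mul_le_mul_of_nonneg_left hk1' (le_of_lt hk0)]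
    exact_mod_cast hk'
  -- from h2 : n ≤ k*(k+1) in ℝ
  have hsqrt : Real.sqrt (1 + 4*n) ≤ 1 + 2*(k:ℝ) := by
    have : Real.sqrt (1 + 4*n) ≤ 1 + 2*s - 2*ε := by linarith
    rw [hε] at this; linarith
  have hnkk : (n:ℝ) ≤ k * (k+1) := by
    have h14 : (1:ℝ) + 4*n ≤ (1 + 2*(k:ℝ))^2 := by
      nlinarith [Real.sq_sqrt (show (0:ℝ) ≤ 1+4*(n:ℝ) by positivity),
        mul_self_le_mul_self (Real.sqrt_nonneg ((1:ℝ)+4*(n:ℝ))) hsqrt]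
    nlinarith
  -- the key value identity
  have hval : (2*s - 1 + ε^2/k) / n = (1/(n:ℝ)) * (k + (n:ℝ)/k - 1) := by
    rw [hε]
    field_simp
    linear_combination hs2
  constructor
  · exact ⟨k, hk1, hkn, hval⟩
  · rintro x ⟨m, hm1, hm2, rfl⟩
    rw [hval]
    have hm0 : (0:ℝ) < m := by exact_mod_cast hm1
    have key : (k:ℝ) + n/k ≤ m + n/m := by
      have hdiff : ((m:ℝ) + n/m) - (k + n/k) = (((m:ℝ)-k)*(m*k - n))/(m*k) := by
        field_simp; ring
      have hnum : 0 ≤ ((m:ℝ)-k)*((m:ℝ)*k - n) := by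
        rcases le_or_gt m k with h | h
        · have hmk : (m:ℝ) ≤ k := by exact_mod_cast h
          have h2' : (m:ℝ)*k ≤ n := by
            have : (m:ℝ)*k ≤ k*k := mul_le_mul_of_nonneg_right hmk (le_of_lt hk0)
            nlinarith [hk2n]
          have hp := mul_nonneg (show (0:ℝ) ≤ k - m by linarith)
            (show (0:ℝ) ≤ n - m*k by linarith)
          linear_combination hp
        · have hmk : (k:ℝ) + 1 ≤ m := by exact_mod_cast h
          have h2' : (n:ℝ) ≤ m*k := by
            have : (k:ℝ)*(k+1) ≤ k*m := mul_le_mul_of_nonneg_left hmk (le_of_lt hk0)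
            nlinarith [hnkk]
          have hp := mul_nonneg (show (0:ℝ) ≤ m - k by linarith)
            (show (0:ℝ) ≤ m*k - n by linarith)
          linear_combination hp
      have := div_nonneg hnum (le_of_lt (mul_pos hm0 hk0))
      linarith [hdiff ▸ this]
    have h1n : (0:ℝ) ≤ 1/n := by positivity
    apply mul_le_mul_of_nonneg_left _ h1n
    linarith
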